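/- Let K be a linearly ordered field and n ≥ 1. Let M and N be n×n matrices over K. Suppose (v_1, …, v_n) and (w_1, …, w_n) are bases of K^n and λ_1 > λ_2 > … > λ_n > 0 and μ_1 > μ_2 > … > μ_n > 0 are scalars in K such that M v_i = λ_i v_i and N w_i = μ_i w_i for all i. If M^k = N^m for some positive integers k and m, then λ_i^k = μ_i^m and span(v_i) = span(w_i) for every i = 1, …, n; in particular, span(v_1, …, v_i) = span(w_1, …, w_i) for every i, i.e., the stable flags of M and N coincide. -/

import Mathlib

/-- If `M` and `N` are positively hyperbolic matrices (distinct strictly positive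
eigenvalues in decreasing order, with eigenbases `v` and `w`) and `M^k = N^m` for some
positive integers `k`, `m`, then the eigenvalues satisfy `λᵢ^k = μᵢ^m`, the eigenlines
coincide, and the stable flags of `M` and `N` coincide. -/
theorem stable_flags_eq_of_pow_eq
    {K : Type*} [Field K] [LinearOrder K] [IsStrictOrderedRing K] {n : ℕ} (hn : 1 ≤ n)
    (M N : Matrix (Fin n) (Fin n) K)
    (v w : Fin n → Fin n → K)
    (hv : LinearIndependent K v) (hvspan : Submodule.span K (Set.range v) = ⊤)
    (hw : LinearIndependent K w) (hwspan : Submodule.span K (Set.range w) = ⊤)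
    (lam mu : Fin n → K)
    (hlam : StrictAnti lam) (hlampos : ∀ i, 0 < lam i)
    (hmu : StrictAnti mu) (hmupos : ∀ i, 0 < mu i)
    (hMv : ∀ i, M.mulVec (v i) = lam i • v i)
    (hNw : ∀ i, N.mulVec (w i) = mu i • w i)
    (k m : ℕ) (hk : 0 < k) (hm : 0 < m)
    (hMN : M ^ k = N ^ m) :
    (∀ i : Fin n, lam i ^ k = mu i ^ m ∧
      Submodule.span K ({v i} : Set (Fin n → K)) =
        Submodule.span K ({w i} : Set (Fin n → K))) ∧
    ∀ i : Fin n,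
      Submodule.span K (v '' {j : Fin n | j ≤ i}) =
        Submodule.span K (w '' {j : Fin n | j ≤ i}) := by
  classical
  -- powers of eigen-equations
  have hPow : ∀ (A : Matrix (Fin n) (Fin n) K) (u : Fin n → K) (c : K),
      A.mulVec u = c • u → ∀ j : ℕ, (A ^ j).mulVec u = c ^ j • u := by
    intro A u c h j
    induction j with
    | zero => simp
    | succ j ih =>
      rw [pow_succ, ← Matrix.mulVec_mulVec, h, Matrix.mulVec_smul, ih,
        smul_smul, pow_succ, mul_comm]
  have hPv : ∀ i, (M ^ k).mulVec (v i) = lam i ^ k • v i := fun i =>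
    hPow M (v i) (lam i) (hMv i) k
  have hPw : ∀ i, (M ^ k).mulVec (w i) = mu i ^ m • w i := fun i => by
    rw [hMN]; exact hPow N (w i) (mu i) (hNw i) m
  have hlamk : StrictAnti fun j => lam j ^ k := fun a b hab =>
    pow_lt_pow_left₀ (hlam hab) (hlampos b).le hk.ne'
  have hmum : StrictAnti fun j => mu j ^ m := fun a b hab =>
    pow_lt_pow_left₀ (hmu hab) (hmupos b).le hm.ne'
  -- basis from v
  let b : Module.Basis (Fin n) K (Fin n → K) := Module.Basis.mk hv (by rw [hvspan])
  have hb : ∀ j, b j = v j := fun j => Module.Basis.mk_apply hv _ j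
  set c : Fin n → Fin n → K := fun i j => b.repr (w i) j with hc
  have hsum : ∀ i, ∑ j, c i j • v j = w i := by
    intro i
    have := b.sum_repr (w i)
    simpa [hb] using this
  -- key relation
  have key : ∀ i j, c i j * lam j ^ k = mu i ^ m * c i j := by
    intro i j
    have h1 : (M ^ k).mulVec (w i) = ∑ j, c i j • (lam j ^ k • v j) := by
      rw [← hsum i]
      have : (M ^ k).mulVec (∑ j, c i j • v j) = ∑ j, c i j • (M ^ k).mulVec (v j) := by
        simp only [← Matrix.mulVecLin_apply, map_sum, map_smul]
      rw [this]
      exact Finset.sum_congr rfl fun j _ => by rw [hPv j]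
    have h2 : (M ^ k).mulVec (w i) = ∑ j, (mu i ^ m * c i j) • v j := by
      rw [hPw i, ← hsum i, Finset.smul_sum]
      exact Finset.sum_congr rfl fun j _ => by rw [smul_smul]
    have h3 : ∑ j, (c i j * lam j ^ k - mu i ^ m * c i j) • v j = 0 := by
      have := h1.symm.trans h2
      rw [← sub_eq_zero, ← Finset.sum_sub_distrib] at this
      rw [← this]
      exact Finset.sum_congr rfl fun j _ => by rw [sub_smul, smul_smul]
    have := Fintype.linearIndependent_iff.mp hv _ h3 j
    linarith [this]
  -- existence of a nonzero coordinate
  have hex : ∀ i, ∃ j, c i j ≠ 0 := by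
    intro i
    by_contra h
    push_neg at h
    have : w i = 0 := by rw [← hsum i]; simp [h]
    exact hw.ne_zero i this
  choose σ hσ using hex
  have heig : ∀ i, lam (σ i) ^ k = mu i ^ m := by
    intro i
    have := key i (σ i)
    rw [mul_comm (c i (σ i))] at this
    exact mul_left_cancel₀ (hσ i) (by linarith [this])
  have huniq : ∀ i j, c i j ≠ 0 → j = σ i := by
    intro i j hj
    have h1 : lam j ^ k = mu i ^ m := by
      have := key i j
      rw [mul_comm (c i j)] at this
      exact mul_left_cancel₀ hj (by linarith [this])
    exact hlamk.injective (h1.trans (heig i).symm)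
  have hwi : ∀ i, w i = c i (σ i) • v (σ i) := by
    intro i
    rw [← hsum i]
    rw [Finset.sum_eq_single (σ i)]
    · intro j _ hj
      by_cases hcj : c i j = 0
      · simp [hcj]
      · exact absurd (huniq i j hcj) hj
    · intro h; exact absurd (Finset.mem_univ _) h
  -- σ is strictly monotone, hence the identity
  have hσmono : StrictMono σ := by
    intro i i' hii
    by_contra h
    push_neg at h
    have h1 : lam (σ i) ^ k ≤ lam (σ i') ^ k := hlamk.antitone h
    have h2 : mu i' ^ m < mu i ^ m := hmum hii
    rw [heig i, heig i'] at h1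
    linarith
  have hσid : σ = id := by
    haveI : WellFoundedLT (Fin n) := inferInstance
    have h := (hσmono.range_inj (g := id) strictMono_id)
    rw [Set.range_id] at h
    exact h.1 (Set.range_eq_univ.mpr (Finite.surjective_of_injective hσmono.injective))
  have hσi : ∀ i, σ i = i := fun i => congrFun hσid i
  have hwi' : ∀ i, w i = c i i • v i := fun i => by
    have := hwi i; rwa [hσi i] at this
  have hcne : ∀ i, c i i ≠ 0 := fun i => by
    have := hσ i; rwa [hσi i] at this
  have hspan : ∀ i : Fin n, Submodule.span K ({v i} : Set (Fin n → K)) =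
      Submodule.span K ({w i} : Set (Fin n → K)) := by
    intro i
    rw [hwi' i]
    exact (Submodule.span_singleton_smul_eq (IsUnit.mk0 _ (hcne i)) (v i)).symm
  constructor
  · intro i
    refine ⟨?_, hspan i⟩
    have := heig i; rwa [hσi i] at this
  · intro i
    apply le_antisymm
    · rw [Submodule.span_le]
      rintro x ⟨j, hj, rfl⟩
      have : v j = (c j j)⁻¹ • w j := by
        rw [hwi' j, smul_smul, inv_mul_cancel₀ (hcne j), one_smul]
      rw [this]
      exact Submodule.smul_mem _ _ (Submodule.subset_span ⟨j, hj, rfl⟩)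
    · rw [Submodule.span_le]
      rintro x ⟨j, hj, rfl⟩
      rw [hwi' j]
      exact Submodule.smul_mem _ _ (Submodule.subset_span ⟨j, hj, rfl⟩)
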